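/- Let u, v : ℝ × ℝ^d → ℝ^d be C¹ vector fields with forward flow Φ^u_{0→t} and backward flow Φ^v_{t→0}, and define the hybrid flow f(t) = Φ^v_{t→0}(Φ^u_{0→t}(x₀)). Then f is differentiable and f'(t) = D_x Φ^v_{t→0}(x_t) · (u(t, x_t) − v(t, x_t)), where x_t = Φ^u_{0→t}(x₀). -/

import Mathlib

open Set Function
open scoped Manifold

/-- A `C¹` map `V : F → F`, seen as a section of the tangent bundle of the vector
space `F`, is `C¹` in the manifold sense. -/
lemma hybrid_contMDiff_tangent_section_of_contDiff
    {F : Type*} [NormedAddCommGroup F] [NormedSpace ℝ F]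
    {V : F → F} (hV : ContDiff ℝ 1 V) :
    ContMDiff 𝓘(ℝ, F) 𝓘(ℝ, F).tangent 1
      (fun x => (⟨x, V x⟩ : TangentBundle 𝓘(ℝ, F) F)) := by
  rw [contMDiff_iff]
  constructor
  · exact (tangentBundleModelSpaceHomeomorph 𝓘(ℝ, F)).symm.continuous.comp
      (continuous_id.prodMk hV.continuous)
  · intro x y
    apply ContDiffOn.congr (f := fun x => (x, V x))
    · exact (contDiff_id.prodMk hV).contDiffOn
    · intro z hz
      simp only [comp_apply, mfld_simps]
      rfl

/-- Uniqueness / group property for flows of a time-dependent `C¹` vector field,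
obtained by viewing solution curves as integral curves of the autonomous field
`(s, x) ↦ (1, v s x)` on `ℝ × E`. -/
lemma hybrid_flow_group {E : Type*} [NormedAddCommGroup E] [NormedSpace ℝ E]
    {v : ℝ → E → E} (hv : ContDiff ℝ 1 (Function.uncurry v))
    {Φ : ℝ → ℝ → E → E}
    (hode : ∀ t s x, HasDerivAt (fun s' => Φ t s' x) (v s (Φ t s x)) s)
    {t₁ t₂ t₀ : ℝ} {x y : E} (h : Φ t₁ t₀ x = Φ t₂ t₀ y) (s : ℝ) :
    Φ t₁ s x = Φ t₂ s y := by
  set V : ℝ × E → ℝ × E := fun q => (1, v q.1 q.2) with hVdef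
  have hV : ContDiff ℝ 1 V := contDiff_const.prodMk hv
  have key : ∀ τ z, IsMIntegralCurve (I := 𝓘(ℝ, ℝ × E)) (M := ℝ × E)
      (fun s' => ((s', Φ τ s' z) : ℝ × E)) (fun q => V q) := by
    intro τ z s'
    refine HasFDerivAt.hasMFDerivAt ?_
    exact ((hasDerivAt_id s').prodMk (hode τ s' z)).hasFDerivAt
  have := isMIntegralCurve_Ioo_eq_of_contMDiff_boundaryless (t₀ := t₀)
    (hybrid_contMDiff_tangent_section_of_contDiff hV) (key t₁ x) (key t₂ y)
    (by simp [h])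
  exact congrArg Prod.snd (congrFun this s)

/-- Fencing lemma: a solution cannot move further than the speed bound allows
(one-sided version, to the right of `a`). -/
lemma hybrid_trap_aux {E : Type*} [NormedAddCommGroup E] [NormedSpace ℝ E]
    {g G : ℝ → E} {a b M ρ : ℝ} (hab : a ≤ b) (hM : 0 ≤ M)
    (hsmall : (M + 1) * (b - a) < ρ)
    (hg : ∀ s, HasDerivAt g (G s) s)
    (hbound : ∀ s ∈ Icc a b, ‖g s - g a‖ ≤ ρ → ‖G s‖ ≤ M) :
    ∀ s ∈ Icc a b, ‖g s - g a‖ ≤ ρ := by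
  have hba : 0 ≤ b - a := by linarith
  have hρ : 0 < ρ := lt_of_le_of_lt (by nlinarith) hsmall
  set ε : ℝ := (ρ - M * (b - a)) / (1 + (b - a)) with hε
  have hεpos : 0 < ε := by
    apply div_pos _ (by linarith)
    nlinarith
  have hεval : ε * (1 + (b - a)) = ρ - M * (b - a) := by
    rw [hε]; field_simp
  have hBb : ε + (M + ε) * (b - a) ≤ ρ := by nlinarith
  have main : ∀ s ∈ Icc a b, ‖g s - g a‖ ≤ ε + (M + ε) * (s - a) := by
    apply image_norm_le_of_norm_deriv_right_lt_deriv_boundary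
      (f' := G) (B' := fun _ => M + ε)
      (fun s _ => ((hg s).sub_const (g a)).continuousAt.continuousWithinAt)
      (fun s _ => ((hg s).sub_const (g a)).hasDerivWithinAt)
      (by simp [hεpos.le])
      (fun x => by
        simpa using ((((hasDerivAt_id x).sub_const a).const_mul (M + ε)).const_add ε))
    intro x hx hEq
    have hxb : ε + (M + ε) * (x - a) ≤ ε + (M + ε) * (b - a) := by nlinarith [hx.1, hx.2.le]
    have h1 : ‖g x - g a‖ ≤ ρ := by rw [hEq]; linarith
    exact lt_of_le_of_lt (hbound x ⟨hx.1, hx.2.le⟩ h1) (by linarith)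
  intro s hs
  have := main s hs
  have h2 : ε + (M + ε) * (s - a) ≤ ε + (M + ε) * (b - a) := by nlinarith [hs.1, hs.2]
  linarith

/-- Two-sided fencing lemma on `[a - δ, a + δ]`. -/
lemma hybrid_trap_two {E : Type*} [NormedAddCommGroup E] [NormedSpace ℝ E]
    {g G : ℝ → E} {a δ M ρ : ℝ} (hδ : 0 ≤ δ) (hM : 0 ≤ M)
    (hsmall : (M + 1) * δ < ρ)
    (hg : ∀ s, HasDerivAt g (G s) s)
    (hbound : ∀ s ∈ Icc (a - δ) (a + δ), ‖g s - g a‖ ≤ ρ → ‖G s‖ ≤ M) :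
    ∀ s ∈ Icc (a - δ) (a + δ), ‖g s - g a‖ ≤ ρ := by
  have hM1 : 0 < M + 1 := by linarith
  intro s hs
  rcases le_total a s with h | h
  · exact hybrid_trap_aux (ρ := ρ) (b := s) h hM
      (by nlinarith [hs.2]) hg
      (fun r hr hgr => hbound r ⟨by linarith [hr.1], by linarith [hr.2, hs.2]⟩ hgr)
      s ⟨h, le_refl s⟩
  · have hg2 : ∀ τ, HasDerivAt (fun τ => g (2 * a - τ)) (-G (2 * a - τ)) τ := by
      intro τ
      have haff : HasDerivAt (fun τ : ℝ => 2 * a - τ) (-1) τ := by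
        exact (hasDerivAt_id τ).const_sub (2*a)
      have := (hg (2 * a - τ)).scomp τ haff
      simpa [Function.comp_def] using this
    have key := hybrid_trap_aux (a := a) (b := 2 * a - s) (ρ := ρ)
      (g := fun τ => g (2 * a - τ)) (G := fun τ => -G (2 * a - τ))
      (by linarith) hM (by nlinarith [hs.1]) hg2
      (fun r hr hgr => by
        have : ‖G (2 * a - r)‖ ≤ M := by
          apply hbound (2 * a - r) ⟨by linarith [hr.2, hs.1], by linarith [hr.1, hδ]⟩
          simpa [show 2 * a - a = a by ring] using hgr
        simpa using this)
    have := key (2 * a - s) ⟨by linarith, le_refl _⟩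
    simpa [show 2 * a - (2 * a - s) = s by ring, show 2 * a - a = a by ring] using this

lemma hybrid_mem_uIcc_abs {a b s : ℝ} (hs : s ∈ uIcc a b) :
    |s - b| ≤ |a - b| ∧ |s - a| ≤ |a - b| := by
  have F1 := le_abs_self (a - b)
  have F2 := neg_abs_le (a - b)
  have F3 := abs_nonneg (a - b)
  rcases le_total a b with h | h
  · rw [uIcc_of_le h] at hs
    exact ⟨abs_le.mpr ⟨by linarith [hs.1], by linarith [hs.2]⟩,
      abs_le.mpr ⟨by linarith [hs.1], by linarith [hs.2]⟩⟩
  · rw [uIcc_of_ge h] at hs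
    exact ⟨abs_le.mpr ⟨by linarith [hs.1], by linarith [hs.2]⟩,
      abs_le.mpr ⟨by linarith [hs.1], by linarith [hs.2]⟩⟩

/-- Derivative in the initial time of a flow along a moving initial condition:
if `x` has derivative `u₀` at `t`, then `t' ↦ Φ t' t (x t')` has derivative
`u₀ - v t (x t)` at `t`. -/
lemma hybrid_deriv_initial_time {E : Type*} [NormedAddCommGroup E] [NormedSpace ℝ E]
    [ProperSpace E] [CompleteSpace E]
    {v : ℝ → E → E} (hv : Continuous (Function.uncurry v))
    {Φ : ℝ → ℝ → E → E}
    (hself : ∀ t x, Φ t t x = x)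
    (hode : ∀ t s x, HasDerivAt (fun s' => Φ t s' x) (v s (Φ t s x)) s)
    {x : ℝ → E} {t : ℝ} {u₀ : E} (hx : HasDerivAt x u₀ t) :
    HasDerivAt (fun t' => Φ t' t (x t')) (u₀ - v t (x t)) t := by
  set p := x t with hp
  obtain ⟨C, hC⟩ := (isCompact_Icc.prod (isCompact_closedBall p 1)).exists_bound_of_continuousOn
    (f := Function.uncurry v) hv.continuousOn
  set M := max C 0 with hMdef
  have hM : 0 ≤ M := le_max_right _ _
  have hMb : ∀ s z, s ∈ Icc (t-1) (t+1) → z ∈ Metric.closedBall p 1 → ‖v s z‖ ≤ M :=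
    fun s z hs hz => le_trans (hC (s, z) ⟨hs, hz⟩) (le_max_left _ _)
  have hw : HasDerivAt (fun t' => Φ t' t (x t') - x t') (-(v t p)) t := by
    rw [hasDerivAt_iff_isLittleO, Asymptotics.isLittleO_iff]
    intro c hc
    obtain ⟨δ₁, hδ₁pos, hδ₁⟩ := Metric.continuousAt_iff.mp (hv.continuousAt (x := (t, p))) c hc
    set ρ : ℝ := min (1/2) (δ₁/2) with hρdef
    have hρpos : 0 < ρ := lt_min (by norm_num) (by linarith)
    have hρhalf : ρ ≤ 1/2 := min_le_left _ _
    have hρδ : ρ ≤ δ₁/2 := min_le_right _ _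
    set δ : ℝ := min (1/2) (ρ / (2 * (M + 1))) with hδdef
    have hδpos : 0 < δ := lt_min (by norm_num) (by positivity)
    have hδhalf : δ ≤ 1/2 := min_le_left _ _
    have hδρ : (M + 1) * δ < ρ := by
      have h1 : δ ≤ ρ / (2 * (M + 1)) := min_le_right _ _
      have h2 : (M + 1) * δ ≤ (M + 1) * (ρ / (2 * (M + 1))) := by nlinarith
      have h3 : (M + 1) * (ρ / (2 * (M + 1))) = ρ / 2 := by field_simp
      linarith
    have hEv1 : ∀ᶠ t' in nhds t, |t' - t| < min δ δ₁ := by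
      filter_upwards [Metric.ball_mem_nhds t (lt_min hδpos hδ₁pos)] with t' ht'
      simpa [Real.dist_eq] using ht'
    have hκ : (0:ℝ) < min (1/2) (δ₁/2) := lt_min (by norm_num) (by linarith)
    have hEv2 : ∀ᶠ t' in nhds t, ‖x t' - p‖ < min (1/2) (δ₁/2) := by
      filter_upwards [hx.continuousAt (Metric.ball_mem_nhds p hκ)] with t' ht'
      rw [Set.mem_preimage, Metric.mem_ball, dist_eq_norm] at ht'
      exact ht'
    filter_upwards [hEv1, hEv2] with t' h₁ h₂
    have h₁δ : |t' - t| < δ := lt_of_lt_of_le h₁ (min_le_left _ _)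
    have h₁δ₁ : |t' - t| < δ₁ := lt_of_lt_of_le h₁ (min_le_right _ _)
    have h₂half : ‖x t' - p‖ < 1/2 := lt_of_lt_of_le h₂ (min_le_left _ _)
    have h₂δ₁ : ‖x t' - p‖ < δ₁/2 := lt_of_lt_of_le h₂ (min_le_right _ _)
    set g : ℝ → E := fun s => Φ t' s (x t') with hgdef
    set G : ℝ → E := fun s => v s (g s) with hGdef
    have hgd : ∀ s, HasDerivAt g (G s) s := fun s => hode t' s (x t')
    have hga : g t' = x t' := hself t' (x t')
    have habs := abs_le.mp h₁δ.le
    have trap : ∀ s ∈ Icc (t' - δ) (t' + δ), ‖g s - g t'‖ ≤ ρ := by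
      apply hybrid_trap_two hδpos.le hM hδρ hgd
      intro s hs hnear
      rw [hga] at hnear
      apply hMb
      · exact ⟨by linarith [hs.1, habs.1, hδhalf], by linarith [hs.2, habs.2, hδhalf]⟩
      · rw [Metric.mem_closedBall, dist_eq_norm]
        calc ‖g s - p‖ ≤ ‖g s - x t'‖ + ‖x t' - p‖ := norm_sub_le_norm_sub_add_norm_sub _ _ _
        _ ≤ ρ + 1/2 := add_le_add hnear h₂half.le
        _ ≤ 1 := by linarith [hρhalf]
    have hptwise : ∀ s ∈ uIcc t' t, ‖G s - v t p‖ ≤ c := by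
      intro s hs
      obtain ⟨habs1, habs2⟩ := hybrid_mem_uIcc_abs hs
      have habs2' := abs_le.mp (le_trans habs2 h₁δ.le)
      have hsmem : s ∈ Icc (t' - δ) (t' + δ) :=
        ⟨by linarith [habs2'.1], by linarith [habs2'.2]⟩
      have hgs := trap s hsmem
      rw [hga] at hgs
      have hd : dist (s, g s) (t, p) < δ₁ := by
        rw [Prod.dist_eq, max_lt_iff]
        refine ⟨?_, ?_⟩
        · rw [Real.dist_eq]
          exact lt_of_le_of_lt habs1 h₁δ₁
        · rw [dist_eq_norm]
          calc ‖g s - p‖ ≤ ‖g s - x t'‖ + ‖x t' - p‖ := norm_sub_le_norm_sub_add_norm_sub _ _ _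
          _ < δ₁/2 + δ₁/2 := add_lt_add_of_le_of_lt (le_trans hgs hρδ) h₂δ₁
          _ = δ₁ := by ring
      have := hδ₁ hd
      rw [dist_eq_norm] at this
      exact this.le
    have hgc : Continuous g := continuous_iff_continuousAt.mpr fun s => (hgd s).continuousAt
    have hGcont : Continuous G := hv.comp (continuous_id.prodMk hgc)
    have hInt : IntervalIntegrable G MeasureTheory.volume t' t :=
      hGcont.intervalIntegrable _ _
    have hFTC : (∫ s in t'..t, G s) = g t - g t' :=
      intervalIntegral.integral_eq_sub_of_hasDerivAt (fun s _ => hgd s) hInt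
    have hsub : (∫ s in t'..t, (G s - v t p)) = (g t - g t') - (t - t') • v t p := by
      rw [intervalIntegral.integral_sub hInt (intervalIntegrable_const), hFTC,
        intervalIntegral.integral_const]
    have hnorm : ‖∫ s in t'..t, (G s - v t p)‖ ≤ c * |t - t'| :=
      intervalIntegral.norm_integral_le_of_norm_le_const
        (fun s hs => hptwise s (Set.uIoc_subset_uIcc hs))
    have hzero : Φ t t (x t) - x t = 0 := by rw [hself]; simp
    show ‖Φ t' t (x t') - x t' - (Φ t t (x t) - x t) - (t' - t) • (-(v t p))‖ ≤ c * ‖t' - t‖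
    rw [hzero, sub_zero]
    have e1 : g t - g t' = Φ t' t (x t') - x t' := by rw [hga]
    have heq : Φ t' t (x t') - x t' - (t' - t) • (-(v t p)) = ∫ s in t'..t, (G s - v t p) := by
      rw [hsub, ← e1]
      have e2 : (t - t') • v t p = -((t' - t) • v t p) := by
        rw [← neg_smul]; congr 1; ring
      rw [e2, sub_neg_eq_add, smul_neg, sub_neg_eq_add]
    rw [heq, Real.norm_eq_abs, abs_sub_comm t' t]
    exact hnorm
  have h0 : HasDerivAt (fun t' => x t' + (Φ t' t (x t') - x t')) (u₀ + -(v t p)) t := hx.add hw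
  have hfun : (fun t' => x t' + (Φ t' t (x t') - x t')) = fun t' => Φ t' t (x t') :=
    funext fun t' => by abel
  rw [hfun] at h0
  simpa [sub_eq_add_neg] using h0

/-- Derivative of the hybrid flow `f t = Φ^v_{t→0}(Φ^u_{0→t}(x₀))`:
`f'(t) = D_x Φ^v_{t→0}(x_t) · (u(t,x_t) - v(t,x_t))` where `x_t = Φ^u_{0→t}(x₀)`. -/
theorem hybrid_flow_deriv {d : ℕ}
    (u v : ℝ → EuclideanSpace ℝ (Fin d) → EuclideanSpace ℝ (Fin d))
    (hu : ContDiff ℝ 1 (Function.uncurry u)) (hv : ContDiff ℝ 1 (Function.uncurry v))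
    (Φu Φv : ℝ → ℝ → EuclideanSpace ℝ (Fin d) → EuclideanSpace ℝ (Fin d))
    (hΦuself : ∀ t x, Φu t t x = x)
    (hΦuode : ∀ t s x, HasDerivAt (fun s' => Φu t s' x) (u s (Φu t s x)) s)
    (hΦvself : ∀ t x, Φv t t x = x)
    (hΦvode : ∀ t s x, HasDerivAt (fun s' => Φv t s' x) (v s (Φv t s x)) s)
    (hΦvdiff : ∀ t s, Differentiable ℝ (Φv t s))
    (x₀ : EuclideanSpace ℝ (Fin d)) (t : ℝ) :
    HasDerivAt (fun t' => Φv t' 0 (Φu 0 t' x₀))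
      (fderiv ℝ (Φv t 0) (Φu 0 t x₀)
        (u t (Φu 0 t x₀) - v t (Φu 0 t x₀))) t := by
  set x : ℝ → EuclideanSpace ℝ (Fin d) := fun t' => Φu 0 t' x₀ with hxdef
  -- the moving initial condition has derivative u t (x t)
  have hxd : HasDerivAt x (u t (x t)) t := hΦuode 0 t x₀
  -- derivative of c t' = Φv t' t (x t')
  have hc : HasDerivAt (fun t' => Φv t' t (x t')) (u t (x t) - v t (x t)) t :=
    hybrid_deriv_initial_time hv.continuous hΦvself hΦvode hxd
  -- rewrite the hybrid flow through the base-time-t flow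
  have hgroup : ∀ t', Φv t 0 (Φv t' t (x t')) = Φv t' 0 (x t') := by
    intro t'
    exact hybrid_flow_group hv hΦvode (t₀ := t) (hΦvself t (Φv t' t (x t'))) 0
  have hfun : (fun t' => Φv t' 0 (Φu 0 t' x₀)) = fun t' => Φv t 0 (Φv t' t (x t')) :=
    funext fun t' => (hgroup t').symm
  rw [hfun]
  have hct : Φv t t (x t) = x t := hΦvself t (x t)
  have hD : HasFDerivAt (Φv t 0) (fderiv ℝ (Φv t 0) (x t)) (Φv t t (x t)) := by
    rw [hct]
    exact ((hΦvdiff t 0) (x t)).hasFDerivAt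
  exact hD.comp_hasDerivAt t hc
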